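/- The Choi-type map Φ[1] on 3×3 matrices, Φ[1](ρ) = (1/2)·[[ρ₀₀+ρ₂₂, -ρ₀₁, -ρ₀₂],[-ρ₁₀, ρ₁₁+ρ₀₀, -ρ₁₂],[-ρ₂₀, -ρ₂₁, ρ₂₂+ρ₁₁]], is trace-preserving and positive, and for every pure state π = |ψ⟩⟨ψ| on ℂ³ one has 4·e₂(Φ[1](π)) = 1, where e₂ denotes the second elementary symmetric polynomial of the eigenvalues. -/

import Mathlib

set_option maxHeartbeats 1000000


open Matrix ComplexOrder

/-- The Choi map Φ[1] on 3×3 matrices. -/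
noncomputable def choiMapOne (ρ : Matrix (Fin 3) (Fin 3) ℂ) : Matrix (Fin 3) (Fin 3) ℂ :=
  (1 / 2 : ℂ) • !![ρ 0 0 + ρ 2 2, -ρ 0 1, -ρ 0 2;
                   -ρ 1 0, ρ 1 1 + ρ 0 0, -ρ 1 2;
                   -ρ 2 0, -ρ 2 1, ρ 2 2 + ρ 1 1]

def rk1 (v : Fin 3 → ℂ) : Matrix (Fin 3) (Fin 3) ℂ := Matrix.of fun i j => v i * star (v j)

lemma choiMapOne_zero : choiMapOne 0 = 0 := by
  ext i j
  fin_cases i <;> fin_cases j <;> simp [choiMapOne, Matrix.vecHead, Matrix.vecTail]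

lemma choiMapOne_add (A B : Matrix (Fin 3) (Fin 3) ℂ) :
    choiMapOne (A + B) = choiMapOne A + choiMapOne B := by
  ext i j
  fin_cases i <;> fin_cases j <;> (simp [choiMapOne, Matrix.vecHead, Matrix.vecTail]; ring)

lemma choiMapOne_herm (v : Fin 3 → ℂ) : (choiMapOne (rk1 v)).IsHermitian := by
  ext i j
  fin_cases i <;> fin_cases j <;>
    simp [choiMapOne, rk1, Matrix.vecHead, Matrix.vecTail, Matrix.conjTranspose_apply, mul_comm]

lemma amgm3 (u v w : ℝ) (hu : 0 ≤ u) (hv : 0 ≤ v) (hw : 0 ≤ w) :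
    3*(u*v*w) ≤ u^2*v + v^2*w + w^2*u := by
  nlinarith [mul_nonneg hu (sq_nonneg (v-w)), mul_nonneg hv (sq_nonneg (w-u)),
    mul_nonneg hw (sq_nonneg (u-v)), mul_nonneg hu (sq_nonneg (u-v)),
    mul_nonneg hv (sq_nonneg (v-w)), mul_nonneg hw (sq_nonneg (w-u)),
    mul_nonneg hu (sq_nonneg (u-w)), mul_nonneg hv (sq_nonneg (v-u)),
    mul_nonneg hw (sq_nonneg (w-v))]

lemma key6 (a b c p q r : ℝ) (ha : 0 ≤ a) (hb : 0 ≤ b) (hc : 0 ≤ c) :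
    (a*p + b*q + c*r)^2 ≤ (2*a^2+c^2)*p^2 + (a^2+2*b^2)*q^2 + (b^2+2*c^2)*r^2 := by
  rcases eq_or_lt_of_le (by positivity : (0:ℝ) ≤ 2*a^2+c^2) with h0 | h0
  · have ha0 : a = 0 := by nlinarith [sq_nonneg a, sq_nonneg c]
    have hc0 : c = 0 := by nlinarith [sq_nonneg a, sq_nonneg c]
    subst ha0; subst hc0; nlinarith [sq_nonneg (b*q)]
  rcases eq_or_lt_of_le (by positivity : (0:ℝ) ≤ a^2+2*b^2) with h1 | h1
  · have ha0 : a = 0 := by nlinarith [sq_nonneg a, sq_nonneg b]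
    have hb0 : b = 0 := by nlinarith [sq_nonneg a, sq_nonneg b]
    subst ha0; subst hb0; nlinarith [sq_nonneg (c*r)]
  rcases eq_or_lt_of_le (by positivity : (0:ℝ) ≤ b^2+2*c^2) with h2 | h2
  · have hb0 : b = 0 := by nlinarith [sq_nonneg b, sq_nonneg c]
    have hc0 : c = 0 := by nlinarith [sq_nonneg b, sq_nonneg c]
    subst hb0; subst hc0; nlinarith [sq_nonneg (a*p)]
  have hprod : 0 < (2*a^2+c^2) * (a^2+2*b^2) * (b^2+2*c^2) := by positivity
  have hT : (0:ℝ) ≤ (2*a^2+c^2)*p^2 + (a^2+2*b^2)*q^2 + (b^2+2*c^2)*r^2 := by positivity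
  have hH : 0 ≤ (a^2)^2*(b^2) + (b^2)^2*(c^2) + (c^2)^2*(a^2) - 3*(a^2*(b^2)*(c^2)) := by
    have := amgm3 (a^2) (b^2) (c^2) (sq_nonneg a) (sq_nonneg b) (sq_nonneg c)
    linarith
  have iden :
      ((2*a^2+c^2)*p^2 + (a^2+2*b^2)*q^2 + (b^2+2*c^2)*r^2) * ((2*a^2+c^2)*(a^2+2*b^2)*(b^2+2*c^2))
      - (a*p + b*q + c*r)^2 * ((2*a^2+c^2)*(a^2+2*b^2)*(b^2+2*c^2))
      = (b^2+2*c^2)*(a*(a^2+2*b^2)*q - b*(2*a^2+c^2)*p)^2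
      + (a^2+2*b^2)*(a*(b^2+2*c^2)*r - c*(2*a^2+c^2)*p)^2
      + (2*a^2+c^2)*(b*(b^2+2*c^2)*r - c*(a^2+2*b^2)*q)^2
      + ((a^2)^2*(b^2) + (b^2)^2*(c^2) + (c^2)^2*(a^2) - 3*(a^2*(b^2)*(c^2)))
        * ((2*a^2+c^2)*p^2 + (a^2+2*b^2)*q^2 + (b^2+2*c^2)*r^2) := by
    ring
  have c1 : (0:ℝ) ≤ (b^2+2*c^2)*(a*(a^2+2*b^2)*q - b*(2*a^2+c^2)*p)^2 := by positivity
  have c2 : (0:ℝ) ≤ (a^2+2*b^2)*(a*(b^2+2*c^2)*r - c*(2*a^2+c^2)*p)^2 := by positivity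
  have c3 : (0:ℝ) ≤ (2*a^2+c^2)*(b*(b^2+2*c^2)*r - c*(a^2+2*b^2)*q)^2 := by positivity
  have c4 := mul_nonneg hH hT
  have main : (a*p + b*q + c*r)^2 * ((2*a^2+c^2)*(a^2+2*b^2)*(b^2+2*c^2))
      ≤ ((2*a^2+c^2)*p^2 + (a^2+2*b^2)*q^2 + (b^2+2*c^2)*r^2) * ((2*a^2+c^2)*(a^2+2*b^2)*(b^2+2*c^2)) := by
    linarith [iden, c1, c2, c3, c4]
  exact le_of_mul_le_mul_right main hprod


lemma choiMapOne_rk1_posSemidef (v : Fin 3 → ℂ) : (choiMapOne (rk1 v)).PosSemidef := by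
  refine Matrix.PosSemidef.of_dotProduct_mulVec_nonneg (choiMapOne_herm v) fun x => ?_
  set E : ℂ := star (x 0) * v 0 + star (x 1) * v 1 + star (x 2) * v 2 with hE
  have hQ : dotProduct (star x) (choiMapOne (rk1 v) *ᵥ x)
      = ((((2*Complex.normSq (v 0)+Complex.normSq (v 2))*Complex.normSq (x 0)
          + (Complex.normSq (v 0)+2*Complex.normSq (v 1))*Complex.normSq (x 1)
          + (Complex.normSq (v 1)+2*Complex.normSq (v 2))*Complex.normSq (x 2)
          - Complex.normSq E) / 2 : ℝ) : ℂ) := by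
    push_cast
    rw [← Complex.mul_conj, ← Complex.mul_conj, ← Complex.mul_conj, ← Complex.mul_conj,
      ← Complex.mul_conj, ← Complex.mul_conj, ← Complex.mul_conj]
    simp only [dotProduct, mulVec, Fin.sum_univ_three, choiMapOne, rk1, Matrix.smul_apply,
      Matrix.of_apply, Matrix.cons_val', Matrix.cons_val_zero, Matrix.cons_val_one,
      Matrix.head_cons, Matrix.head_fin_const, Matrix.empty_val', Matrix.cons_val_fin_one,
      Matrix.vecHead, Matrix.vecTail, hE, smul_eq_mul, Matrix.cons_val_succ, Pi.star_apply, Matrix.cons_val_two, Matrix.tail_cons, _root_.map_add, _root_.map_mul, Complex.conj_conj,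
      Complex.star_def, Function.comp]
    ring
  rw [hQ, Complex.zero_le_real]
  have habs : ‖E‖ ≤ ‖v 0‖ * ‖x 0‖
      + ‖v 1‖ * ‖x 1‖ + ‖v 2‖ * ‖x 2‖ := by
    refine le_trans (norm_add_le _ _) ?_
    have h1 := norm_add_le (star (x 0) * v 0) (star (x 1) * v 1)
    simp only [norm_mul, Complex.star_def, Complex.norm_conj] at *
    nlinarith [norm_nonneg (v 2), norm_nonneg (x 2)]
  have hsq : Complex.normSq E ≤ (‖v 0‖ * ‖x 0‖
      + ‖v 1‖ * ‖x 1‖ + ‖v 2‖ * ‖x 2‖)^2 := by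
    rw [← Complex.sq_norm]
    exact pow_le_pow_left₀ (norm_nonneg E) habs 2
  have hk := key6 (‖v 0‖) (‖v 1‖) (‖v 2‖)
    (‖x 0‖) (‖x 1‖) (‖x 2‖)
    (norm_nonneg _) (norm_nonneg _) (norm_nonneg _)
  rw [← Complex.sq_norm (v 0), ← Complex.sq_norm (v 1), ← Complex.sq_norm (v 2),
    ← Complex.sq_norm (x 0), ← Complex.sq_norm (x 1), ← Complex.sq_norm (x 2)]
  linarith [hk, hsq]


lemma psd_add {A B : Matrix (Fin 3) (Fin 3) ℂ} (hA : A.PosSemidef) (hB : B.PosSemidef) :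
    (A + B).PosSemidef := by
  refine Matrix.PosSemidef.of_dotProduct_mulVec_nonneg (hA.1.add hB.1) fun x => ?_
  rw [Matrix.add_mulVec, dotProduct_add]
  exact add_nonneg (hA.dotProduct_mulVec_nonneg x) (hB.dotProduct_mulVec_nonneg x)

lemma psd_zero : (0 : Matrix (Fin 3) (Fin 3) ℂ).PosSemidef :=
  ⟨Matrix.isHermitian_zero, fun x => by simp⟩

lemma choiMapOne_sum {ι : Type*} (s : Finset ι) (f : ι → Matrix (Fin 3) (Fin 3) ℂ) :
    choiMapOne (∑ i ∈ s, f i) = ∑ i ∈ s, choiMapOne (f i) := by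
  induction s using Finset.cons_induction with
  | empty => simpa using choiMapOne_zero
  | cons a s h ih => rw [Finset.sum_cons, Finset.sum_cons, choiMapOne_add, ih]

lemma psd_sum {ι : Type*} (s : Finset ι) (f : ι → Matrix (Fin 3) (Fin 3) ℂ)
    (h : ∀ i ∈ s, (f i).PosSemidef) : (∑ i ∈ s, f i).PosSemidef := by
  induction s using Finset.cons_induction with
  | empty => simpa using psd_zero
  | cons a s ha ih =>
      rw [Finset.sum_cons]
      exact psd_add (h a (Finset.mem_cons_self a s))
        (ih fun i hi => h i (Finset.mem_cons_of_mem hi))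

lemma choiMapOne_posSemidef {ρ : Matrix (Fin 3) (Fin 3) ℂ} (hρ : ρ.PosSemidef) :
    (choiMapOne ρ).PosSemidef := by
  open scoped MatrixOrder Matrix.Norms.L2Operator in
  obtain ⟨B, rfl⟩ := CStarAlgebra.nonneg_iff_eq_star_mul_self.mp hρ.nonneg
  rw [Matrix.star_eq_conjTranspose]
  have hdec : Bᴴ * B = ∑ k : Fin 3, rk1 (fun i => star (B k i)) := by
    ext i j
    simp [Matrix.sum_apply, rk1, Matrix.mul_apply, Matrix.conjTranspose_apply]
  rw [hdec, choiMapOne_sum]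
  exact psd_sum _ _ fun k _ => choiMapOne_rk1_posSemidef _

/-- Φ[1] is trace-preserving and positive, and for every pure state π on ℂ³
    one has 4·e₂(Φ[1](π)) = 1, where e₂(A) = ((Tr A)² - Tr(A²))/2. -/
theorem choiMapOne_properties :
    (∀ ρ : Matrix (Fin 3) (Fin 3) ℂ, (choiMapOne ρ).trace = ρ.trace) ∧
    (∀ ρ : Matrix (Fin 3) (Fin 3) ℂ, ρ.PosSemidef → (choiMapOne ρ).PosSemidef) ∧
    (∀ π : Matrix (Fin 3) (Fin 3) ℂ, π.PosSemidef → π.trace = 1 → π * π = π →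
      4 * (((choiMapOne π).trace ^ 2 - ((choiMapOne π) * (choiMapOne π)).trace) / 2)
        = 1) := by
  refine ⟨fun ρ => ?_, fun ρ h => choiMapOne_posSemidef h, fun π hpsd htr hmul => ?_⟩
  · simp [choiMapOne, Matrix.trace_fin_three, Matrix.vecHead, Matrix.vecTail]
    ring
  · have h1 : π 0 0 + π 1 1 + π 2 2 = 1 := by
      simpa [Matrix.trace_fin_three] using htr
    have h2 : (π * π).trace = 1 := by rw [hmul, htr]
    simp only [Matrix.trace_fin_three, Matrix.mul_apply, Fin.sum_univ_three] at h2
    simp only [Matrix.trace_fin_three, Matrix.mul_apply, Fin.sum_univ_three, choiMapOne,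
      Matrix.smul_apply, Matrix.of_apply, Matrix.cons_val', Matrix.cons_val_zero,
      Matrix.cons_val_one, Matrix.head_cons, Matrix.cons_val_succ, Matrix.cons_val_two, Matrix.tail_cons, Matrix.empty_val',
      Matrix.cons_val_fin_one, Matrix.vecHead, Matrix.vecTail, smul_eq_mul, Function.comp]
    linear_combination (3/2 + (3/2 : ℂ) * (π 0 0 + π 1 1 + π 2 2)) * h1 - (1/2 : ℂ) * h2
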